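/- If both d²/dt²(k r_T) = r_T Ω² and the quasi-3D condition d²/dt²(r_T(1-k)) = r_T(1-k)Ω² hold, with Ω² = (1/(k r_T))·d²/dt²(k r_T) and k r_T ≠ 0, then k̈ r_T + 2k̇ ṙ_T = 0. -/

import Mathlib

theorem quasi3D_derivation
    (I : Set ℝ)
    (rT k : ℝ → ℝ)
    (hrT : Differentiable ℝ rT) (hrT' : Differentiable ℝ (deriv rT))
    (hk : Differentiable ℝ k) (hk' : Differentiable ℝ (deriv k))
    (hne : ∀ t ∈ I, k t * rT t ≠ 0)
    (Ω2 : ℝ → ℝ)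
    (hΩ2 : ∀ t ∈ I, Ω2 t = deriv (deriv (fun s => k s * rT s)) t / (k t * rT t))
    (h1 : ∀ t ∈ I, deriv (deriv (fun s => k s * rT s)) t = rT t * Ω2 t)
    (h2 : ∀ t ∈ I, deriv (deriv (fun s => rT s * (1 - k s))) t
            = rT t * (1 - k t) * Ω2 t) :
    ∀ t ∈ I, deriv (deriv k) t * rT t + 2 * deriv k t * deriv rT t = 0 := by
  intro t ht
  -- first derivative of k * rT
  have hd1 : deriv (fun s => k s * rT s)
      = fun s => deriv k s * rT s + k s * deriv rT s := by
    funext s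
    exact deriv_mul (hk s) (hrT s)
  -- second derivative of k * rT
  have hd2 : ∀ u : ℝ, deriv (deriv (fun s => k s * rT s)) u
      = deriv (deriv k) u * rT u + 2 * deriv k u * deriv rT u
        + k u * deriv (deriv rT) u := by
    intro u
    rw [hd1]
    rw [deriv_fun_add (f := fun s => deriv k s * rT s) (g := fun s => k s * deriv rT s) ((hk' u).mul (hrT u)) ((hk u).mul (hrT' u)),
        deriv_fun_mul (hk' u) (hrT u), deriv_fun_mul (hk u) (hrT' u)]
    ring
  -- rT * (1 - k) rewritten
  have hfun : (fun s => rT s * (1 - k s)) = fun s => rT s - k s * rT s := by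
    funext s; ring
  have hd1' : deriv (fun s => rT s - k s * rT s)
      = fun s => deriv rT s - deriv (fun s => k s * rT s) s := by
    funext s
    exact deriv_sub (hrT s) ((hk.mul hrT) s)
  have hd2' : deriv (deriv (fun s => rT s * (1 - k s))) t
      = deriv (deriv rT) t - deriv (deriv (fun s => k s * rT s)) t := by
    rw [hfun, hd1']
    have : (fun s => deriv rT s - deriv (fun s => k s * rT s) s)
        = fun s => deriv rT s - (deriv k s * rT s + k s * deriv rT s) := by
      funext s; rw [hd1]
    rw [this]
    rw [deriv_fun_sub (g := fun s => deriv k s * rT s + k s * deriv rT s) (hrT' t) (((hk' t).mul (hrT t)).add ((hk t).mul (hrT' t)))]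
    congr 1
    rw [hd1]
  -- set A := (k*rT)'' t
  set A := deriv (deriv (fun s => k s * rT s)) t with hA
  have hkrT := hne t ht
  have hΩ := hΩ2 t ht
  -- A = k t * rT t * Ω2 t
  have e1 : A = k t * rT t * Ω2 t := by
    rw [hΩ, ← mul_div_assoc, mul_div_cancel_left₀ _ hkrT]
  have e2 : A = rT t * Ω2 t := h1 t ht
  have e3 : (1 - k t) * (rT t * Ω2 t) = 0 := by
    nlinarith [e1, e2]
  have e4 : deriv (deriv rT) t - A = rT t * (1 - k t) * Ω2 t := by
    rw [← hd2']; exact h2 t ht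
  have e5 : deriv (deriv rT) t = A := by nlinarith [e3, e4]
  have e6 := hd2 t
  -- goal: k'' rT + 2 k' rT' = 0
  have e7 : deriv (deriv k) t * rT t + 2 * deriv k t * deriv rT t
      = A - k t * deriv (deriv rT) t := by linarith [e6]
  rw [e7, e5, e2]
  nlinarith [e3]
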